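/- For α, β > 0, the zero sequence is the minimizer of the elastic-net functional Φ_{α,β} if and only if α ≥ sup over nonzero h ∈ ℓ¹ ∩ ℓ² of ⟨K*y^δ, h⟩ / ‖h‖_{ℓ¹}. -/

import Mathlib

noncomputable section

open Filter Topology

/-- `ℓ²(ℕ, ℝ)`. -/
abbrev ltwo : Type := lp (fun _ : ℕ => ℝ) 2

/-- `x ∈ ℓ¹`. -/
def inL1 (x : ltwo) : Prop := Memℓp (fun i => x i) 1

/-- The `ℓ¹`-norm `‖x‖_{ℓ¹} = ∑ |xᵢ|` (junk value if `x ∉ ℓ¹`). -/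
noncomputable def l1norm (x : ltwo) : ℝ := ∑' i, |x i|

/-- The elastic-net functional `Φ_{α,β}(x) = ½‖Kx − y‖² + α‖x‖₁ + (β/2)‖x‖₂²`,
real-valued on its effective domain `ℓ¹ ∩ ℓ²` (the convention `Φ = +∞` off `ℓ¹` is
implemented by restricting all statements to `inL1`). -/
noncomputable def Phi {H : Type*} [NormedAddCommGroup H] [InnerProductSpace ℝ H]
    (K : ltwo →L[ℝ] H) (y : H) (α β : ℝ) (x : ltwo) : ℝ :=
  (1 / 2) * ‖K x - y‖ ^ 2 + α * l1norm x + (β / 2) * ‖x‖ ^ 2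

/-- `x` is a minimizer of `Φ_{α,β}` over `ℓ²` (with the `+∞` convention off `ℓ¹`). -/
def IsMinimizer {H : Type*} [NormedAddCommGroup H] [InnerProductSpace ℝ H]
    (K : ltwo →L[ℝ] H) (y : H) (α β : ℝ) (x : ltwo) : Prop :=
  inL1 x ∧ ∀ z : ltwo, inL1 z → Phi K y α β x ≤ Phi K y α β z

lemma inL1_summable {x : ltwo} (hx : inL1 x) : Summable (fun i => |x i|) := by
  have := (memℓp_gen_iff (p := 1) (by norm_num)).mp hx
  simpa using this

lemma l1norm_pos {x : ltwo} (hx : inL1 x) (hne : x ≠ 0) : 0 < l1norm x := by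
  obtain ⟨i, hi⟩ : ∃ i, x i ≠ 0 := by
    by_contra hc
    push_neg at hc
    exact hne (lp.ext (funext hc))
  exact Summable.tsum_pos (inL1_summable hx) (fun j => abs_nonneg _) i (abs_pos.mpr hi)

lemma l1norm_smul (t : ℝ) (x : ltwo) : l1norm (t • x) = |t| * l1norm x := by
  unfold l1norm
  rw [← tsum_mul_left]
  congr 1; funext i
  rw [lp.coeFn_smul, Pi.smul_apply, smul_eq_mul, abs_mul]

lemma l1norm_zero : l1norm (0 : ltwo) = 0 := by
  unfold l1norm
  simp [lp.coeFn_zero]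

lemma inL1_zero : inL1 (0 : ltwo) := by
  have : (fun i => (0 : ltwo) i) = (0 : ∀ _ : ℕ, ℝ) := by
    funext i; simp [lp.coeFn_zero]
  rw [inL1, this]
  exact zero_memℓp

lemma Phi_zero {H : Type*} [NormedAddCommGroup H] [InnerProductSpace ℝ H]
    (K : ltwo →L[ℝ] H) (y : H) (α β : ℝ) :
    Phi K y α β 0 = (1 / 2) * ‖y‖ ^ 2 := by
  simp [Phi, l1norm_zero]

/-- The zero sequence minimizes the elastic-net functional if and only if
`α ≥ sup_{h ≠ 0} ⟨K*y^δ, h⟩ / ‖h‖₁` (the supremum over nonzero `h ∈ ℓ¹ ∩ ℓ²`). -/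
theorem elasticNet_zero_minimizer_iff
    {H : Type*} [NormedAddCommGroup H] [InnerProductSpace ℝ H] [CompleteSpace H]
    (K : ltwo →L[ℝ] H) (ydelta : H) (α β : ℝ) (hα : 0 < α) (hβ : 0 < β) :
    IsMinimizer K ydelta α β 0 ↔
      ∀ h : ltwo, inL1 h → h ≠ 0 →
        (inner ℝ (ContinuousLinearMap.adjoint K ydelta) h : ℝ) / l1norm h ≤ α := by
  constructor
  · intro hmin h h1 hne
    have h1pos := l1norm_pos h1 hne
    have hcKy : (inner ℝ (ContinuousLinearMap.adjoint K ydelta) h : ℝ)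
        = inner ℝ (K h) ydelta := by
      rw [ContinuousLinearMap.adjoint_inner_left, real_inner_comm]
    rw [div_le_iff₀ h1pos, hcKy]
    -- show ⟪K h, y⟫ ≤ α * ‖h‖₁
    apply le_of_forall_pos_le_add
    intro ε hε
    set C : ℝ := (1 / 2) * ‖K h‖ ^ 2 + (β / 2) * ‖h‖ ^ 2 with hC
    have hC0 : 0 ≤ C := by positivity
    set t : ℝ := ε / (C + 1) with ht
    have htpos : 0 < t := div_pos hε (by linarith)
    clear_value C t
    have hkey := hmin.2 (t • h) (Memℓp.const_smul h1 t)
    rw [Phi_zero] at hkey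
    have hexp : ‖K (t • h) - ydelta‖ ^ 2
        = t ^ 2 * ‖K h‖ ^ 2 - 2 * t * inner ℝ (K h) ydelta + ‖ydelta‖ ^ 2 := by
      rw [map_smul, norm_sub_sq_real, norm_smul, real_inner_smul_left]
      simp [abs_of_pos htpos]
      ring
    rw [Phi, hexp, l1norm_smul, norm_smul, Real.norm_eq_abs, abs_of_pos htpos] at hkey
    have hc2 : t ^ 2 * C = t ^ 2 * (1 / 2 * ‖K h‖ ^ 2) + t ^ 2 * (β / 2 * ‖h‖ ^ 2) := by
      rw [hC]; ring
    have hkey2 : t * inner ℝ (K h) ydelta ≤ t * (α * l1norm h) + t ^ 2 * C := by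
      nlinarith [hkey, hc2]
    have := (mul_le_mul_iff_right₀ htpos).mp (by linarith [hkey2] :
      t * inner ℝ (K h) ydelta ≤ t * (α * l1norm h + t * C))
    have htC : t * C ≤ ε := by
      rw [ht]
      rw [div_mul_eq_mul_div, div_le_iff₀ (by linarith : (0:ℝ) < C + 1)]
      nlinarith
    linarith [this]
  · intro hsup
    refine ⟨inL1_zero, fun z hz => ?_⟩
    have hbound : (inner ℝ (K z) ydelta : ℝ) ≤ α * l1norm z := by
      rcases eq_or_ne z 0 with rfl | hne
      · simp [l1norm_zero]
      · have h1pos := l1norm_pos hz hne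
        have := hsup z hz hne
        rw [div_le_iff₀ h1pos, ContinuousLinearMap.adjoint_inner_left,
          real_inner_comm] at this
        linarith [this]
    rw [Phi_zero, Phi, norm_sub_sq_real]
    nlinarith [sq_nonneg ‖K z‖, sq_nonneg ‖z‖, hbound]

end
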